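/- If K and K' are jacket matrices of orders 2n and 2n' over R, then K ⊗ K' is permutation equivalent to a jacket matrix of order 4nn'. -/

import Mathlib

open Matrix Kronecker

/-- A jacket matrix of order `2n` over a commutative ring `R`: a normalised GBH matrix
(`K K* = K* K = 2n • I` where `K*` is the transpose of the entrywise inverse, with all-1s
first row and column) whose last row and last column have all entries in `{1, -1}`. -/
def IsJacket {R : Type*} [CommRing R] (n : ℕ) (hn : 1 ≤ n)
    (K : Matrix (Fin (2 * n)) (Fin (2 * n)) R) : Prop :=
  (∃ Kstar : Matrix (Fin (2 * n)) (Fin (2 * n)) R,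
      (∀ i j, Kstar i j * K j i = 1) ∧
      K * Kstar = ((2 * n : ℕ) : R) • 1 ∧ Kstar * K = ((2 * n : ℕ) : R) • 1) ∧
  (∀ j, K ⟨0, by omega⟩ j = 1) ∧ (∀ i, K i ⟨0, by omega⟩ = 1) ∧
  (∀ j, K ⟨2 * n - 1, by omega⟩ j = 1 ∨ K ⟨2 * n - 1, by omega⟩ j = -1) ∧
  (∀ i, K i ⟨2 * n - 1, by omega⟩ = 1 ∨ K i ⟨2 * n - 1, by omega⟩ = -1)

/-- If `K` and `K'` are jacket matrices of orders `2n` and `2n'` over `R`,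
then `K ⊗ K'` is permutation equivalent to a jacket matrix of order `4nn'`. -/
theorem stmt12 {R : Type*} [CommRing R] {n n' : ℕ} (hn : 1 ≤ n) (hn' : 1 ≤ n')
    (K : Matrix (Fin (2 * n)) (Fin (2 * n)) R)
    (K' : Matrix (Fin (2 * n')) (Fin (2 * n')) R)
    (hK : IsJacket n hn K) (hK' : IsJacket n' hn' K') :
    ∃ (J : Matrix (Fin (2 * (2 * (n * n')))) (Fin (2 * (2 * (n * n')))) R)
      (σ τ : Fin (2 * (2 * (n * n'))) ≃ Fin (2 * n) × Fin (2 * n')),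
      (∀ a b, J a b = (K ⊗ₖ K') (σ a) (τ b)) ∧
      IsJacket (2 * (n * n')) (by nlinarith) J := by
  obtain ⟨⟨Ks, hinv, hKs1, hKs2⟩, hr0, hc0, hrl, hcl⟩ := hK
  obtain ⟨⟨Ks', hinv', hKs1', hKs2'⟩, hr0', hc0', hrl', hcl'⟩ := hK'
  have hdim : 2 * (2 * (n * n')) = (2 * n) * (2 * n') := by ring
  set e : Fin (2 * (2 * (n * n'))) ≃ Fin (2 * n) × Fin (2 * n') :=
    (finCongr hdim).trans finProdFinEquiv.symm with he
  have he0 : e ⟨0, by have := Nat.mul_le_mul hn hn'; omega⟩ = (⟨0, by omega⟩, ⟨0, by omega⟩) := by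
    apply e.symm.injective
    rw [Equiv.symm_apply_apply]
    simp only [he, Equiv.symm_trans_apply, Equiv.symm_symm]
    ext
    simp [finProdFinEquiv]
  have hel : e ⟨2 * (2 * (n * n')) - 1, by have := Nat.mul_le_mul hn hn'; omega⟩ =
      (⟨2 * n - 1, by omega⟩, ⟨2 * n' - 1, by omega⟩) := by
    apply e.symm.injective
    rw [Equiv.symm_apply_apply]
    simp only [he, Equiv.symm_trans_apply, Equiv.symm_symm]
    ext
    simp only [finProdFinEquiv, Equiv.coe_fn_mk, finCongr_symm, finCongr_apply, Fin.coe_cast]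
    zify [show 1 ≤ 2 * (2 * (n * n')) by have := Nat.mul_le_mul hn hn'; omega, show 1 ≤ 2 * n by omega,
      show 1 ≤ 2 * n' by omega]
    ring
  refine ⟨(K ⊗ₖ K').submatrix e e, e, e, fun a b => rfl, ⟨(Ks ⊗ₖ Ks').submatrix e e,
    fun i j => ?_, ?_, ?_⟩, fun j => ?_, fun i => ?_, fun j => ?_, fun i => ?_⟩
  · simp only [submatrix_apply, kroneckerMap_apply]
    rw [mul_mul_mul_comm]
    rw [hinv, hinv', one_mul]
  · rw [submatrix_mul_equiv, ← mul_kronecker_mul, hKs1, hKs1', smul_kronecker,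
      kronecker_smul, one_kronecker_one, smul_smul]
    ext a b
    simp only [submatrix_apply, Matrix.smul_apply, one_apply, EmbeddingLike.apply_eq_iff_eq,
      smul_eq_mul, mul_ite, mul_one, mul_zero]
    split_ifs with h
    · push_cast; ring
    · rfl
  · rw [submatrix_mul_equiv, ← mul_kronecker_mul, hKs2, hKs2', smul_kronecker,
      kronecker_smul, one_kronecker_one, smul_smul]
    ext a b
    simp only [submatrix_apply, Matrix.smul_apply, one_apply, EmbeddingLike.apply_eq_iff_eq,
      smul_eq_mul, mul_ite, mul_one, mul_zero]
    split_ifs with h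
    · push_cast; ring
    · rfl
  · simp only [submatrix_apply, he0, kroneckerMap_apply]
    rw [hr0, hr0', one_mul]
  · simp only [submatrix_apply, he0, kroneckerMap_apply]
    rw [hc0, hc0', one_mul]
  · simp only [submatrix_apply, hel, kroneckerMap_apply]
    rcases hrl (e j).1 with h | h <;> rcases hrl' (e j).2 with h' | h' <;> simp [h, h']
  · simp only [submatrix_apply, hel, kroneckerMap_apply]
    rcases hcl (e i).1 with h | h <;> rcases hcl' (e i).2 with h' | h' <;> simp [h, h']
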